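/- In the one-step ViSE model with a neutral Gaussian proposal generator (μ = 0), the expected capital gain of a group member is nonnegative for every integer threshold t. -/

import Mathlib

open MeasureTheory ProbabilityTheory
open scoped Classical NNReal

lemma integrable_id_gaussianReal_aux {v : ℝ≥0} (hv : v ≠ 0) :
    Integrable (fun x : ℝ => x) (gaussianReal 0 v) := by
  have hv0 : 0 < (v : ℝ) := by positivity
  rw [gaussianReal_of_var_ne_zero _ hv,
    integrable_withDensity_iff (measurable_gaussianPDF _ _)
      (Filter.Eventually.of_forall fun x => ENNReal.ofReal_lt_top)]
  have h : (fun x : ℝ => x * (gaussianPDF 0 v x).toReal)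
      = fun x => (Real.sqrt (2 * Real.pi * v))⁻¹ * (x * Real.exp (-(2 * (v : ℝ))⁻¹ * x ^ 2)) := by
    funext x
    rw [gaussianPDF, ENNReal.toReal_ofReal (gaussianPDFReal_nonneg _ _ _), gaussianPDFReal]
    have : -(x - 0) ^ 2 / (2 * (v : ℝ)) = -(2 * (v : ℝ))⁻¹ * x ^ 2 := by ring
    rw [this]; ring
  rw [h]
  exact (integrable_mul_exp_neg_mul_sq (by positivity)).const_mul _

lemma pi_map_eval_aux {ι : Type*} [Fintype ι] (μ : ι → Measure ℝ)
    [∀ j, IsProbabilityMeasure (μ j)] (i : ι) :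
    (Measure.pi μ).map (Function.eval i) = μ i := by
  ext s hs
  rw [Measure.map_apply (measurable_pi_apply i) hs, Set.eval_preimage, Measure.pi_pi]
  rw [Finset.prod_eq_single i (fun j _ hj => by simp [Function.update_of_ne hj])
    (fun h => absurd (Finset.mem_univ i) h)]
  simp

/-- In the one-step ViSE model with a neutral Gaussian proposal generator
(`μ = 0`), the expected capital gain of a group member is nonnegative for every integer
threshold `t`. -/
theorem neutral_groupMember_ECG_nonneg
    (n : ℕ) (G : Finset (Fin n)) (g ℓ : ℕ)
    (hgcard : G.card = g) (hg1 : 1 ≤ g) (hℓ : ℓ = n - g)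
    (σ : ℝ) (hσ : 0 < σ) (t : ℤ)
    -- the proposal is a vector of i.i.d. N(0, σ²) components (neutral environment, μ = 0)
    (ν : Measure (Fin n → ℝ))
    (hν : ν = Measure.pi fun _ : Fin n => gaussianReal 0 (⟨σ ^ 2, sq_nonneg σ⟩ : ℝ≥0))
    -- the set of proposals that are accepted: strictly more than `t` votes in favor,
    -- where individualist `i` votes iff `ω i > 0` and group members vote iff `∑_{j∈G} ω j > 0`
    (A : Set (Fin n → ℝ))
    (hA : A = {ω : Fin n → ℝ |
      t < ((Finset.univ.filter fun i : Fin n =>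
        if i ∈ G then 0 < ∑ j ∈ G, ω j else 0 < ω i).card : ℤ)})
    -- `i` is a group member
    (i : Fin n) (hi : i ∈ G) :
    0 ≤ ∫ ω in A, ω i ∂ν := by
  subst hν hA
  set v : ℝ≥0 := (⟨σ ^ 2, sq_nonneg σ⟩ : ℝ≥0) with hv
  have hvne : v ≠ 0 := by
    intro h
    have : σ ^ 2 = 0 := congrArg NNReal.toReal h
    nlinarith
  set μ0 : Measure ℝ := gaussianReal 0 v with hμ0
  set ν : Measure (Fin n → ℝ) := Measure.pi fun _ : Fin n => μ0 with hνdef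
  -- notation
  set S : (Fin n → ℝ) → ℝ := fun ω => ∑ j ∈ G, ω j with hS
  set kc : (Fin n → ℝ) → ℤ := fun ω => ((Gᶜ.filter fun m => 0 < ω m).card : ℤ) with hkc
  -- rewrite A
  have hcard : ∀ ω : Fin n → ℝ,
      ((Finset.univ.filter fun m : Fin n =>
        if m ∈ G then 0 < ∑ j ∈ G, ω j else 0 < ω m).card : ℤ)
      = (if 0 < S ω then (G.card : ℤ) else 0) + kc ω := by
    intro ω
    have hu : (Finset.univ : Finset (Fin n)) = G ∪ Gᶜ := (Finset.union_compl G).symm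
    rw [hu, Finset.filter_union, Finset.card_union_of_disjoint
      (Finset.disjoint_filter_filter disjoint_compl_right)]
    push_cast
    congr 1
    · by_cases h : 0 < S ω
      · rw [Finset.filter_true_of_mem (fun m hm => by simpa [hm] using h), if_pos h]
      · rw [Finset.filter_false_of_mem (fun m hm => by simpa [hm] using h), if_neg h,
          Finset.card_empty, Nat.cast_zero]
    · congr 2
      apply Finset.filter_congr
      intro m hm
      simp [Finset.mem_compl.mp hm]
  have hAset : {ω : Fin n → ℝ |
      t < ((Finset.univ.filter fun i : Fin n =>
        if i ∈ G then 0 < ∑ j ∈ G, ω j else 0 < ω i).card : ℤ)}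
      = {ω : Fin n → ℝ | t < (if 0 < S ω then (G.card : ℤ) else 0) + kc ω} := by
    ext ω; simp only [Set.mem_setOf_eq, hcard ω]
  rw [hAset]
  set A : Set (Fin n → ℝ) :=
    {ω : Fin n → ℝ | t < (if 0 < S ω then (G.card : ℤ) else 0) + kc ω} with hAdef
  -- measurability
  have mS : Measurable S := Finset.measurable_sum G fun j _ => measurable_pi_apply j
  have mkc : Measurable kc := by
    have : kc = fun ω => ∑ m ∈ Gᶜ, (if 0 < ω m then (1 : ℤ) else 0) := by
      funext ω
      simp only [hkc, Finset.card_filter]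
      push_cast [apply_ite (Nat.cast : ℕ → ℤ)]
      rfl
    rw [this]
    exact Finset.measurable_sum _ fun m _ =>
      Measurable.ite (measurableSet_lt measurable_const (measurable_pi_apply m))
        measurable_const measurable_const
  have hSpos : MeasurableSet {ω : Fin n → ℝ | 0 < S ω} :=
    measurableSet_lt measurable_const mS
  have mB : Measurable fun ω => (if 0 < S ω then (G.card : ℤ) else 0) + kc ω :=
    (Measurable.ite hSpos measurable_const measurable_const).add mkc
  have hAmeas : MeasurableSet A := by
    have : A = (fun ω => (if 0 < S ω then (G.card : ℤ) else 0) + kc ω) ⁻¹' (Set.Ioi t) := rfl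
    rw [this]
    exact mB measurableSet_Ioi
  -- integrability of coordinates
  haveI : IsProbabilityMeasure μ0 := by rw [hμ0]; infer_instance
  have int_j : ∀ j : Fin n, Integrable (fun ω : Fin n → ℝ => ω j) ν := by
    intro j
    have h1 : Integrable (fun x : ℝ => x) (ν.map (Function.eval j)) := by
      rw [hνdef, pi_map_eval_aux]
      exact integrable_id_gaussianReal_aux hvne
    exact (integrable_map_measure aestronglyMeasurable_id
      (measurable_pi_apply j).aemeasurable).mp h1
  have intS : Integrable S ν := integrable_finset_sum G fun j _ => int_j j
  -- Step 1: exchangeability inside the group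
  have step1 : ∀ j ∈ G, ∫ ω in A, ω j ∂ν = ∫ ω in A, ω i ∂ν := by
    intro j hj
    set e : Equiv.Perm (Fin n) := Equiv.swap i j with he
    have hesymm : e.symm = e := Equiv.symm_swap i j
    set T : (Fin n → ℝ) ≃ᵐ (Fin n → ℝ) :=
      MeasurableEquiv.arrowCongr' e (MeasurableEquiv.refl ℝ) with hT
    have hTapp : ∀ (x : Fin n → ℝ) m, T x m = x (e m) := by
      intro x m
      simp [hT, MeasurableEquiv.arrowCongr', Equiv.arrowCongr', Equiv.arrowCongr, hesymm]
    have hTmp : MeasurePreserving T ν ν := by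
      rw [hνdef]
      exact measurePreserving_arrowCongr' _ _ e (MeasurableEquiv.refl ℝ)
        (fun _ => ⟨measurable_id, Measure.map_id⟩)
    have heG : ∀ m : Fin n, m ∈ G ↔ e m ∈ G := by
      intro m
      rcases eq_or_ne m i with rfl | hmi
      · simp [he, Equiv.swap_apply_left, hj, hi]
      rcases eq_or_ne m j with rfl | hmj
      · simp [he, Equiv.swap_apply_right, hj, hi]
      · rw [he]; rw [Equiv.swap_apply_of_ne_of_ne hmi hmj]
    have hST : ∀ x, S (T x) = S x := by
      intro x
      rw [hS]
      simp only [hTapp]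
      exact Finset.sum_equiv e (fun m => heG m) (fun m _ => rfl)
    have hkcT : ∀ x, kc (T x) = kc x := by
      intro x
      rw [hkc]
      simp only [hTapp]
      congr 2
      apply Finset.filter_congr
      intro m hm
      have hm' := Finset.mem_compl.mp hm
      have : e m = m := by
        rw [he]
        exact Equiv.swap_apply_of_ne_of_ne (fun h => hm' (h ▸ hi)) (fun h => hm' (h ▸ hj))
      rw [this]
    have hTA : T ⁻¹' A = A := by
      ext x
      simp only [Set.mem_preimage, hAdef, Set.mem_setOf_eq, hST, hkcT]
    calc ∫ ω in A, ω j ∂ν = ∫ ω in A, ω j ∂(ν.map T) := by rw [hTmp.map_eq]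
      _ = ∫ x in T ⁻¹' A, (T x) j ∂ν := by
          rw [setIntegral_map hAmeas (measurable_pi_apply j).aestronglyMeasurable
            hTmp.measurable.aemeasurable]
      _ = ∫ x in A, x i ∂ν := by
          rw [hTA]
          apply setIntegral_congr_fun hAmeas
          intro x _
          show T x j = x i
          rw [hTapp x j]
          congr 1
          rw [he]
          exact Equiv.swap_apply_right i j
  have hsum : ∫ ω in A, S ω ∂ν = (G.card : ℝ) * ∫ ω in A, ω i ∂ν := by
    rw [hS]
    rw [integral_finset_sum G (fun j _ => (int_j j).integrableOn)]
    rw [Finset.sum_congr rfl step1, Finset.sum_const, nsmul_eq_mul]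
  -- Step 2: ∫_A S ≥ 0
  set F1 : (Fin n → ℝ) → ℝ :=
    fun ω => if 0 < S ω ∧ t < (G.card : ℤ) + kc ω then S ω else 0 with hF1
  set F2 : (Fin n → ℝ) → ℝ :=
    fun ω => if ¬ 0 < S ω ∧ t < kc ω then S ω else 0 with hF2
  set F3 : (Fin n → ℝ) → ℝ :=
    fun ω => if 0 ≤ S ω ∧ t < kc ω then S ω else 0 with hF3
  have indeq : ∀ (P : (Fin n → ℝ) → Prop) [DecidablePred P],
      (fun ω => if P ω then S ω else 0) = {ω | P ω}.indicator S := by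
    intro P _
    funext ω
    by_cases h : P ω <;> simp [Set.indicator_apply, h]
  have mPF1 : MeasurableSet {ω : Fin n → ℝ | 0 < S ω ∧ t < (G.card : ℤ) + kc ω} := by
    apply MeasurableSet.inter hSpos
    exact (measurable_const.add mkc) measurableSet_Ioi
  have mPF2 : MeasurableSet {ω : Fin n → ℝ | ¬ 0 < S ω ∧ t < kc ω} :=
    (hSpos.compl).inter (mkc measurableSet_Ioi)
  have mPF3 : MeasurableSet {ω : Fin n → ℝ | 0 ≤ S ω ∧ t < kc ω} :=
    (measurableSet_le measurable_const mS).inter (mkc measurableSet_Ioi)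
  have intF1 : Integrable F1 ν := by rw [hF1, indeq]; exact intS.indicator mPF1
  have intF2 : Integrable F2 ν := by rw [hF2, indeq]; exact intS.indicator mPF2
  have intF3 : Integrable F3 ν := by rw [hF3, indeq]; exact intS.indicator mPF3
  -- the reflection
  set R : (Fin n → ℝ) → (Fin n → ℝ) := fun ω m => if m ∈ G then -ω m else ω m with hR
  have hRmp : MeasurePreserving R ν ν := by
    rw [hνdef]
    have hcoord : ∀ m : Fin n, MeasurePreserving
        (fun x : ℝ => if m ∈ G then -x else x) μ0 μ0 := by
      intro m
      by_cases hm : m ∈ G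
      · simp only [hm, if_true]
        refine ⟨measurable_neg, ?_⟩
        have h1 : (fun x : ℝ => -x) = fun x : ℝ => (-1 : ℝ) * x := by funext x; ring
        have h2 : NNReal.mk ((-1 : ℝ) ^ 2) (sq_nonneg _) = 1 := by
          refine NNReal.coe_injective ?_
          norm_num
        rw [h1, hμ0, gaussianReal_map_const_mul, h2, one_mul, neg_one_mul, neg_zero]
      · simp only [hm, if_false]
        exact ⟨measurable_id, Measure.map_id⟩
    exact measurePreserving_pi (fun _ : Fin n => μ0) (fun _ : Fin n => μ0)
      (f := fun m (x : ℝ) => if m ∈ G then -x else x) hcoord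
  have hSR : ∀ ω, S (R ω) = -S ω := by
    intro ω
    simp only [hS, hR]
    rw [← Finset.sum_neg_distrib]
    apply Finset.sum_congr rfl
    intro m hm
    simp [hm]
  have hkcR : ∀ ω, kc (R ω) = kc ω := by
    intro ω
    simp only [hkc, Nat.cast_inj]
    congr 1
    apply Finset.filter_congr
    intro m hm
    simp [hR, Finset.mem_compl.mp hm]
  have hF2R : ∀ ω, F2 (R ω) = -F3 ω := by
    intro ω
    simp only [hF2, hF3, hSR, hkcR]
    by_cases h1 : 0 ≤ S ω
    · by_cases h2 : t < kc ω
      · rw [if_pos ⟨by simpa using h1, h2⟩, if_pos ⟨h1, h2⟩]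
      · rw [if_neg (fun h => h2 h.2), if_neg (fun h => h2 h.2), neg_zero]
    · rw [if_neg, if_neg (fun h => h1 h.1), neg_zero]
      intro h
      have := h.1
      push_neg at this
      exact h1 (by linarith [neg_nonpos.mp this])
  have mF1 : Measurable F1 := Measurable.ite mPF1 mS measurable_const
  have mF2 : Measurable F2 := Measurable.ite mPF2 mS measurable_const
  have key2 : ∫ ω, F2 ω ∂ν = - ∫ ω, F3 ω ∂ν := by
    calc ∫ ω, F2 ω ∂ν = ∫ ω, F2 ω ∂(ν.map R) := by rw [hRmp.map_eq]
      _ = ∫ ω, F2 (R ω) ∂ν :=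
          integral_map hRmp.measurable.aemeasurable mF2.aestronglyMeasurable
      _ = ∫ ω, -F3 ω ∂ν := by simp_rw [hF2R]
      _ = - ∫ ω, F3 ω ∂ν := integral_neg _
  have hsplitfun : A.indicator S = fun ω => F1 ω + F2 ω := by
    funext ω
    rw [Set.indicator_apply]
    by_cases hmem : ω ∈ A
    · rw [if_pos hmem]
      have ht : t < (if 0 < S ω then (G.card : ℤ) else 0) + kc ω := hmem
      by_cases hs : 0 < S ω
      · simp only [hF1, hF2]
        rw [if_pos ⟨hs, by simpa [hs] using ht⟩, if_neg (fun h => h.1 hs), add_zero]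
      · simp only [hF1, hF2]
        rw [if_neg (fun h => hs h.1), if_pos ⟨hs, by simpa [hs] using ht⟩, zero_add]
    · rw [if_neg hmem]
      have ht : ¬ t < (if 0 < S ω then (G.card : ℤ) else 0) + kc ω := hmem
      by_cases hs : 0 < S ω
      · simp only [hF1, hF2]
        rw [if_neg, if_neg (fun h => h.1 hs), add_zero]
        intro h
        exact ht (by simpa [hs] using h.2)
      · simp only [hF1, hF2]
        rw [if_neg (fun h => hs h.1), if_neg, add_zero]
        intro h
        exact ht (by simpa [hs] using h.2)
  have h0 : ∫ ω in A, S ω ∂ν = ∫ ω, F1 ω ∂ν + ∫ ω, F2 ω ∂ν := by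
    rw [← integral_indicator hAmeas, hsplitfun, integral_add intF1 intF2]
  have h1 : ∫ ω in A, S ω ∂ν = ∫ ω, (F1 ω - F3 ω) ∂ν := by
    rw [h0, key2, integral_sub intF1 intF3]
    ring
  have h2 : 0 ≤ ∫ ω in A, S ω ∂ν := by
    rw [h1]
    apply integral_nonneg
    intro ω
    simp only [Pi.zero_apply, hF1, hF3]
    by_cases h3 : 0 ≤ S ω ∧ t < kc ω
    · rw [if_pos h3]
      by_cases hs : 0 < S ω
      · rw [if_pos ⟨hs, by omega⟩]
        simp
      · have hS0 : S ω = 0 := le_antisymm (not_lt.mp hs) h3.1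
        rw [hS0]
        split_ifs <;> simp
    · rw [if_neg h3, sub_zero]
      split_ifs with h4
      · exact le_of_lt h4.1
      · exact le_refl 0
  have hcpos : (0 : ℝ) < (G.card : ℝ) := by
    have : 0 < G.card := by omega
    exact_mod_cast this
  rw [hsum] at h2
  nlinarith [h2, hcpos]
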